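/- Let (W,S) be a Coxeter system and let J ⊆ S be a spherical subset such that the longest element ρ_J of ⟨J⟩ is central in ⟨J⟩. Then the normalizer of ⟨J⟩ in W equals the centralizer of ρ_J in W. -/

import Mathlib

namespace CoxNormAux

open CoxeterSystem List

noncomputable section
local instance (priority := low) {α : Type*} : DecidableEq α := Classical.decEq α

variable {B W : Type*} [Group W] {M : CoxeterMatrix B} (cs : CoxeterSystem M W)

/-- The sign-flipping conjugation map used to build the reflection representation. -/
def bmap (i : B) : W × ℤˣ → W × ℤˣ :=
  fun p => (cs.simple i * p.1 * cs.simple i, p.2 * (if p.1 = cs.simple i then -1 else 1))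

theorem bmap_invol (i : B) : Function.Involutive (bmap cs i) := by
  rintro ⟨x, ε⟩
  have hcond : cs.simple i * x * cs.simple i = cs.simple i ↔ x = cs.simple i := by
    constructor
    · intro h
      have := congrArg (fun z => cs.simple i * z * cs.simple i) h
      simpa [mul_assoc, cs.simple_mul_simple_cancel_left,
        cs.simple_mul_simple_self] using this
    · rintro rfl
      simp [mul_assoc, cs.simple_mul_simple_cancel_left, cs.simple_mul_simple_self]
  by_cases hx : x = cs.simple i
  · simp [bmap, hx, hcond, mul_assoc, cs.simple_mul_simple_cancel_left,
      cs.simple_mul_simple_self]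
  · simp [bmap, hx, hcond, mul_assoc, cs.simple_mul_simple_cancel_left,
      cs.simple_mul_simple_self, mul_eq_one_iff_eq_inv, cs.inv_simple]

/-- The permutation of `W × ℤˣ` corresponding to a simple reflection. -/
def bperm (i : B) : Equiv.Perm (W × ℤˣ) := (bmap_invol cs i).toPerm

@[simp] theorem bperm_apply (i : B) (x : W) (ε : ℤˣ) :
    bperm cs i (x, ε) = (cs.simple i * x * cs.simple i,
      ε * (if x = cs.simple i then -1 else 1)) := rfl

theorem conj_eq_iff {a x y : W} : a * x * a⁻¹ = y ↔ x = a⁻¹ * y * a := by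
  constructor
  · intro h; subst h; group
  · intro h; subst h; group

theorem simple_pow_comm (i j : B) (r : ℕ) :
    cs.simple j * (cs.simple i * cs.simple j) ^ r
      = (cs.simple j * cs.simple i) ^ r * cs.simple j := by
  induction r with
  | zero => simp
  | succ r ih =>
      rw [pow_succ', ← mul_assoc, show cs.simple j * (cs.simple i * cs.simple j)
          = (cs.simple j * cs.simple i) * cs.simple j by group,
        mul_assoc, ih, pow_succ']
      group

theorem inv_pow_simple (i j : B) (k : ℕ) :
    ((cs.simple i * cs.simple j) ^ k)⁻¹ = (cs.simple j * cs.simple i) ^ k := by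
  rw [← inv_pow, mul_inv_rev, cs.inv_simple, cs.inv_simple]

theorem conj_simple_pow₁ (i j : B) (k : ℕ) :
    ((cs.simple i * cs.simple j) ^ k)⁻¹ * cs.simple j * (cs.simple i * cs.simple j) ^ k
      = (cs.simple j * cs.simple i) ^ (2 * k) * cs.simple j := by
  rw [inv_pow_simple, mul_assoc, simple_pow_comm, ← mul_assoc, ← pow_add, two_mul]

theorem conj_simple_pow₂ (i j : B) (k : ℕ) :
    ((cs.simple i * cs.simple j) ^ k)⁻¹ * (cs.simple j * cs.simple i * cs.simple j)
        * (cs.simple i * cs.simple j) ^ k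
      = (cs.simple j * cs.simple i) ^ (2 * k + 1) * cs.simple j := by
  rw [inv_pow_simple]
  calc (cs.simple j * cs.simple i) ^ k * (cs.simple j * cs.simple i * cs.simple j)
        * (cs.simple i * cs.simple j) ^ k
      = (cs.simple j * cs.simple i) ^ (k + 1) *
          (cs.simple j * (cs.simple i * cs.simple j) ^ k) := by
        rw [pow_succ]; group
    _ = (cs.simple j * cs.simple i) ^ (k + 1) *
          ((cs.simple j * cs.simple i) ^ k * cs.simple j) := by rw [simple_pow_comm]
    _ = (cs.simple j * cs.simple i) ^ (2 * k + 1) * cs.simple j := by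
        rw [← mul_assoc, ← pow_add]; ring_nf

theorem bperm_mul_pow_apply (i j : B) (k : ℕ) (x : W) (ε : ℤˣ) :
    ((bperm cs i * bperm cs j) ^ k) (x, ε) =
      ((cs.simple i * cs.simple j) ^ k * x * ((cs.simple i * cs.simple j) ^ k)⁻¹,
        ε * (∏ r ∈ Finset.range k,
          ((if x = (cs.simple j * cs.simple i) ^ (2 * r) * cs.simple j then (-1 : ℤˣ) else 1) *
           (if x = (cs.simple j * cs.simple i) ^ (2 * r + 1) * cs.simple j then (-1 : ℤˣ) else 1))))
    := by
  induction k with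
  | zero => simp
  | succ k ih =>
      rw [pow_succ']
      have happ : ((bperm cs i * bperm cs j) * (bperm cs i * bperm cs j) ^ k) (x, ε)
          = (bperm cs i) ((bperm cs j) (((bperm cs i * bperm cs j) ^ k) (x, ε))) := rfl
      rw [happ, ih]
      set p := cs.simple i * cs.simple j with hp
      set y := p ^ k * x * (p ^ k)⁻¹ with hy
      set E := ε * (∏ r ∈ Finset.range k,
          ((if x = (cs.simple j * cs.simple i) ^ (2 * r) * cs.simple j then (-1 : ℤˣ) else 1) *
           (if x = (cs.simple j * cs.simple i) ^ (2 * r + 1) * cs.simple j then (-1 : ℤˣ) else 1)))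
        with hE
      rw [bperm_apply, bperm_apply]
      rw [Prod.ext_iff]
      have hcond1 : (y = cs.simple j) ↔
          (x = (cs.simple j * cs.simple i) ^ (2 * k) * cs.simple j) := by
        rw [hy, conj_eq_iff, hp, ← conj_simple_pow₁ cs i j k]
      have hcond2 : (cs.simple j * y * cs.simple j = cs.simple i) ↔
          (x = (cs.simple j * cs.simple i) ^ (2 * k + 1) * cs.simple j) := by
        constructor
        · intro h
          have hy2 : y = cs.simple j * cs.simple i * cs.simple j := by
            have := congrArg (fun z => cs.simple j * z * cs.simple j) h
            simpa [mul_assoc, cs.simple_mul_simple_cancel_left,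
              cs.simple_mul_simple_self] using this
          rw [hy, conj_eq_iff, hp] at hy2
          rw [hy2, ← conj_simple_pow₂ cs i j k]
        · intro h
          have hy2 : y = cs.simple j * cs.simple i * cs.simple j := by
            rw [hy, h, hp, ← conj_simple_pow₂ cs i j k]
            group
          rw [hy2]
          simp [mul_assoc, cs.simple_mul_simple_cancel_left, cs.simple_mul_simple_self]
      constructor
      · show cs.simple i * (cs.simple j * y * cs.simple j) * cs.simple i = _
        rw [hy, hp, inv_pow_simple, inv_pow_simple, pow_succ', pow_succ]
        group
      · show E * (if y = cs.simple j then (-1:ℤˣ) else 1)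
            * (if cs.simple j * y * cs.simple j = cs.simple i then (-1:ℤˣ) else 1) = _
        rw [Finset.prod_range_succ, hE]
        simp only [hcond1, hcond2]
        rw [mul_assoc, mul_assoc]

theorem prod_range_two_mul {G : Type*} [CommMonoid G] (h : ℕ → G) (m : ℕ) :
    ∏ n ∈ Finset.range (2 * m), h n
      = ∏ r ∈ Finset.range m, (h (2 * r) * h (2 * r + 1)) := by
  induction m with
  | zero => simp
  | succ m ih =>
      have h2 : 2 * (m + 1) = (2 * m) + 1 + 1 := by ring
      rw [h2, Finset.prod_range_succ, Finset.prod_range_succ, ih, Finset.prod_range_succ,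
        mul_assoc]

theorem bperm_liftable : M.IsLiftable (bperm cs) := by
  intro i j
  apply Equiv.ext
  rintro ⟨x, ε⟩
  rw [show ((1 : Equiv.Perm (W × ℤˣ))) (x, ε) = (x, ε) from rfl]
  rw [bperm_mul_pow_apply, Prod.ext_iff]
  have hp : (cs.simple i * cs.simple j) ^ M i j = 1 := cs.simple_mul_simple_pow i j
  have hq : (cs.simple j * cs.simple i) ^ M i j = 1 := cs.simple_mul_simple_pow' i j
  constructor
  · show (cs.simple i * cs.simple j) ^ M i j * x * ((cs.simple i * cs.simple j) ^ M i j)⁻¹ = x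
    rw [hp]; group
  · show ε * _ = ε
    set h : ℕ → ℤˣ := fun n => if x = (cs.simple j * cs.simple i) ^ n * cs.simple j then -1 else 1
      with hh
    have : ∏ r ∈ Finset.range (M i j), ((if x = (cs.simple j * cs.simple i) ^ (2*r) * cs.simple j
        then (-1:ℤˣ) else 1) * (if x = (cs.simple j * cs.simple i) ^ (2*r+1) * cs.simple j
        then (-1:ℤˣ) else 1)) = ∏ n ∈ Finset.range (2 * M i j), h n := by
      rw [prod_range_two_mul]
    rw [this, two_mul, Finset.prod_range_add]
    have hshift : ∀ n, h (M i j + n) = h n := by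
      intro n
      simp only [hh, pow_add, hq, one_mul]
    simp only [hshift]
    rw [← hh]
    rcases Int.units_eq_one_or (∏ n ∈ Finset.range (M i j), h n) with h1 | h1 <;>
      rw [h1] <;> simp


/-- The reflection permutation representation. -/
def Phi : W →* Equiv.Perm (W × ℤˣ) := cs.lift ⟨bperm cs, bperm_liftable cs⟩

@[simp] theorem Phi_simple (i : B) : Phi cs (cs.simple i) = bperm cs i :=
  cs.lift_apply_simple (bperm_liftable cs) i

/-- The sign cocycle. -/
def csgn (w x : W) : ℤˣ := ((Phi cs w) (x, 1)).2

theorem Phi_apply (w : W) : ∀ (x : W) (ε : ℤˣ),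
    (Phi cs w) (x, ε) = (w * x * w⁻¹, ε * csgn cs w x) := by
  refine cs.simple_induction_left
    (p := fun v => ∀ (x : W) (ε : ℤˣ),
      (Phi cs v) (x, ε) = (v * x * v⁻¹, ε * csgn cs v x)) w ?_ ?_
  · intro x ε
    simp [csgn, map_one]
  · intro v i ih
    have hmul : ∀ (x : W) (ε : ℤˣ), (Phi cs (cs.simple i * v)) (x, ε)
        = (bperm cs i) ((Phi cs v) (x, ε)) := by
      intro x ε
      rw [map_mul, Phi_simple]
      rfl
    have hkey : ∀ (x : W) (ε : ℤˣ), (Phi cs (cs.simple i * v)) (x, ε)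
        = ((cs.simple i * v) * x * (cs.simple i * v)⁻¹,
            ε * (csgn cs v x * (if v * x * v⁻¹ = cs.simple i then (-1 : ℤˣ) else 1))) := by
      intro x ε
      rw [hmul, ih, bperm_apply, Prod.ext_iff]
      constructor
      · show cs.simple i * (v * x * v⁻¹) * cs.simple i
            = cs.simple i * v * x * (cs.simple i * v)⁻¹
        rw [mul_inv_rev, cs.inv_simple]
        group
      · show ε * csgn cs v x * (if v * x * v⁻¹ = cs.simple i then (-1:ℤˣ) else 1)
            = ε * (csgn cs v x * (if v * x * v⁻¹ = cs.simple i then (-1:ℤˣ) else 1))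
        rw [mul_assoc]
    intro x ε
    have hsgn : csgn cs (cs.simple i * v) x
        = csgn cs v x * (if v * x * v⁻¹ = cs.simple i then (-1 : ℤˣ) else 1) := by
      have := hkey x 1
      rw [csgn, this, one_mul]
    rw [hkey, hsgn]

theorem csgn_mul (u v x : W) :
    csgn cs (u * v) x = csgn cs u (v * x * v⁻¹) * csgn cs v x := by
  have h2 : (Phi cs (u * v)) (x, 1) = Phi cs u (Phi cs v (x, 1)) := by
    rw [map_mul]; rfl
  rw [Phi_apply cs v, Phi_apply cs u, Phi_apply cs (u * v)] at h2
  have h3 := congrArg Prod.snd h2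
  simp only [one_mul] at h3
  exact h3.trans (mul_comm _ _)

@[simp] theorem csgn_one (x : W) : csgn cs 1 x = 1 := by
  simp [csgn, map_one]

theorem csgn_simple (i : B) (x : W) :
    csgn cs (cs.simple i) x = if x = cs.simple i then (-1 : ℤˣ) else 1 := by
  simp [csgn, Phi_simple]

theorem csgn_cancel (w x : W) : csgn cs w (w⁻¹ * x * w) * csgn cs w⁻¹ x = 1 := by
  have h := csgn_mul cs w w⁻¹ x
  simp only [mul_inv_cancel, inv_inv, csgn_one] at h
  exact h.symm

theorem leftInvSeq_cons (i : B) (ω : List B) :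
    cs.leftInvSeq (i :: ω)
      = cs.simple i :: List.map (⇑(MulAut.conj (cs.simple i))) (cs.leftInvSeq ω) := rfl

theorem csgn_wordProd_inv (ω : List B) (x : W) :
    csgn cs (cs.wordProd ω)⁻¹ x = (-1 : ℤˣ) ^ (List.count x (cs.leftInvSeq ω)) := by
  induction ω generalizing x with
  | nil => simp
  | cons i ω ih =>
      rw [cs.wordProd_cons, mul_inv_rev, cs.inv_simple, csgn_mul, ih, csgn_simple,
        leftInvSeq_cons]
      have hconj : x = (MulAut.conj (cs.simple i)) (cs.simple i * x * (cs.simple i)⁻¹) := by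
        simp [mul_assoc]
      have hcount : List.count x
          (List.map (⇑(MulAut.conj (cs.simple i))) (cs.leftInvSeq ω))
          = List.count (cs.simple i * x * (cs.simple i)⁻¹) (cs.leftInvSeq ω) := by
        conv_lhs => rw [hconj]
        exact List.count_map_of_injective _ _ (MulAut.conj (cs.simple i)).injective _
      rw [List.count_cons, hcount, pow_add]
      congr 1
      by_cases hxi : x = cs.simple i
      · simp [hxi]
      · simp [hxi, Ne.symm hxi]

theorem csgn_refl_self {t : W} (ht : cs.IsReflection t) : csgn cs t t = -1 := by
  obtain ⟨u, i, hui⟩ := ht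
  have h1 : csgn cs (u * cs.simple i * u⁻¹) t
      = csgn cs (u * cs.simple i) (u⁻¹ * t * (u⁻¹)⁻¹) * csgn cs u⁻¹ t :=
    csgn_mul cs (u * cs.simple i) u⁻¹ t
  have h2 : u⁻¹ * t * (u⁻¹)⁻¹ = cs.simple i := by rw [hui]; group
  have h3 : csgn cs (u * cs.simple i) (cs.simple i)
      = csgn cs u (cs.simple i) * (-1 : ℤˣ) := by
    have := csgn_mul cs u (cs.simple i) (cs.simple i)
    have h4 : cs.simple i * cs.simple i * (cs.simple i)⁻¹ = cs.simple i := by group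
    rw [h4, csgn_simple, if_pos rfl] at this
    exact this
  have h5 : csgn cs u (cs.simple i) * csgn cs u⁻¹ t = 1 := by
    have h6 : u⁻¹ * t * u = cs.simple i := by rw [hui]; group
    have := csgn_cancel cs u t
    rw [h6] at this
    exact this
  nth_rewrite 1 [hui]
  rw [h1, h2, h3, mul_neg_one, neg_mul, h5]

theorem isLeftInversion_of_csgn {t w : W} (h : csgn cs w⁻¹ t = -1) :
    cs.IsLeftInversion w t := by
  obtain ⟨ω, hred, rfl⟩ := cs.exists_reduced_word' w
  rw [csgn_wordProd_inv] at h
  have hodd : Odd (List.count t (cs.leftInvSeq ω)) := by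
    rcases Nat.even_or_odd (List.count t (cs.leftInvSeq ω)) with he | ho
    · exfalso
      rw [he.neg_one_pow] at h
      exact (by decide : ¬((1 : ℤˣ) = -1)) h
    · exact ho
  have hmem : t ∈ cs.leftInvSeq ω := by
    by_contra hmem
    rw [List.count_eq_zero_of_not_mem hmem] at hodd
    simp at hodd
  exact cs.isLeftInversion_of_mem_leftInvSeq hred hmem

theorem mem_leftInvSeq_of_csgn {t : W} {ω : List B} (h : csgn cs (cs.wordProd ω)⁻¹ t = -1) :
    t ∈ cs.leftInvSeq ω := by
  rw [csgn_wordProd_inv] at h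
  have hodd : Odd (List.count t (cs.leftInvSeq ω)) := by
    rcases Nat.even_or_odd (List.count t (cs.leftInvSeq ω)) with he | ho
    · exfalso
      rw [he.neg_one_pow] at h
      exact (by decide : ¬((1 : ℤˣ) = -1)) h
    · exact ho
  by_contra hmem
  rw [List.count_eq_zero_of_not_mem hmem] at hodd
  simp at hodd

theorem isLeftInversion_iff_csgn {t : W} (ht : cs.IsReflection t) (w : W) :
    cs.IsLeftInversion w t ↔ csgn cs w⁻¹ t = -1 := by
  constructor
  · intro hli
    rcases Int.units_eq_one_or (csgn cs w⁻¹ t) with h1 | h1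
    · exfalso
      have hcs : csgn cs (t * w)⁻¹ t = -1 := by
        rw [mul_inv_rev, ht.inv, csgn_mul]
        have htt : t * t * t⁻¹ = t := by group
        rw [htt, csgn_refl_self cs ht, h1, one_mul]
      have hli2 := isLeftInversion_of_csgn cs hcs
      have hw : t * (t * w) = w := by rw [← mul_assoc, ht.mul_self, one_mul]
      have := hli2.2
      rw [hw] at this
      have := hli.2
      omega
    · exact h1
  · exact isLeftInversion_of_csgn cs


theorem one_ne_negone : (1 : ℤˣ) ≠ -1 := by
  intro hh
  have h2 := congrArg (Units.val) hh
  norm_num at h2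

theorem csgn_eq_of_iff {x y : W}
    (h : ∀ t, cs.IsLeftInversion x t ↔ cs.IsLeftInversion y t)
    {u : W} (hu : cs.IsReflection u) : csgn cs x⁻¹ u = csgn cs y⁻¹ u := by
  rcases Int.units_eq_one_or (csgn cs x⁻¹ u) with h1 | h1 <;>
    rcases Int.units_eq_one_or (csgn cs y⁻¹ u) with h2 | h2
  · rw [h1, h2]
  · exfalso
    have hly : cs.IsLeftInversion y u := (isLeftInversion_iff_csgn cs hu y).mpr h2
    have hlx : cs.IsLeftInversion x u := (h u).mpr hly
    have h3 := (isLeftInversion_iff_csgn cs hu x).mp hlx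
    rw [h1] at h3
    exact one_ne_negone h3
  · exfalso
    have hlx : cs.IsLeftInversion x u := (isLeftInversion_iff_csgn cs hu x).mpr h1
    have hly : cs.IsLeftInversion y u := (h u).mp hlx
    have h3 := (isLeftInversion_iff_csgn cs hu y).mp hly
    rw [h2] at h3
    exact one_ne_negone h3
  · rw [h1, h2]

theorem csgn_simple_mul (i : B) (z t : W) :
    csgn cs (cs.simple i * z)⁻¹ t
      = csgn cs z⁻¹ (cs.simple i * t * cs.simple i)
          * (if t = cs.simple i then (-1 : ℤˣ) else 1) := by
  rw [mul_inv_rev, cs.inv_simple, csgn_mul, csgn_simple, cs.inv_simple]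

theorem li_step {x y : W} (i : B)
    (h : ∀ t, cs.IsLeftInversion x t ↔ cs.IsLeftInversion y t)
    {t : W} (hlt : cs.IsLeftInversion (cs.simple i * x) t) :
    cs.IsLeftInversion (cs.simple i * y) t := by
  have htrefl : cs.IsReflection t := hlt.1
  have hconj : cs.IsReflection (cs.simple i * t * cs.simple i) := by
    have := htrefl.conj (cs.simple i)
    rwa [cs.inv_simple] at this
  apply isLeftInversion_of_csgn
  rw [csgn_simple_mul, ← csgn_eq_of_iff cs h hconj, ← csgn_simple_mul]
  exact (isLeftInversion_iff_csgn cs htrefl _).mp hlt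

theorem eq_of_isLeftInversion_iff' : ∀ (n : ℕ) (x y : W), cs.length x ≤ n →
    (∀ t, cs.IsLeftInversion x t ↔ cs.IsLeftInversion y t) → x = y := by
  intro n
  induction n with
  | zero =>
      intro x y hx h
      have hx1 : x = 1 := cs.length_eq_zero_iff.mp (Nat.le_zero.mp hx)
      subst hx1
      by_contra hy
      obtain ⟨i, hi⟩ := cs.exists_leftDescent_of_ne_one (fun hh => hy hh.symm)
      have hliy : cs.IsLeftInversion y (cs.simple i) :=
        (cs.isLeftInversion_simple_iff_isLeftDescent y i).mpr hi
      have := ((h (cs.simple i)).mpr hliy).2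
      simp at this
  | succ n ih =>
      intro x y hx h
      by_cases hx1 : x = 1
      · subst hx1
        by_contra hy
        obtain ⟨i, hi⟩ := cs.exists_leftDescent_of_ne_one (fun hh => hy hh.symm)
        have hliy : cs.IsLeftInversion y (cs.simple i) :=
          (cs.isLeftInversion_simple_iff_isLeftDescent y i).mpr hi
        have := ((h (cs.simple i)).mpr hliy).2
        simp at this
      · obtain ⟨i, hi⟩ := cs.exists_leftDescent_of_ne_one hx1
        have hlix : cs.IsLeftInversion x (cs.simple i) :=
          (cs.isLeftInversion_simple_iff_isLeftDescent x i).mpr hi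
        have hstep : ∀ t, cs.IsLeftInversion (cs.simple i * x) t
            ↔ cs.IsLeftInversion (cs.simple i * y) t :=
          fun t => ⟨li_step cs i h, li_step cs i (fun t => (h t).symm)⟩
        have hlen : cs.length (cs.simple i * x) ≤ n := by
          have := hi
          unfold CoxeterSystem.IsLeftDescent at this
          omega
        have := ih (cs.simple i * x) (cs.simple i * y) hlen hstep
        exact mul_left_cancel this

theorem eq_of_isLeftInversion_iff {x y : W}
    (h : ∀ t, cs.IsLeftInversion x t ↔ cs.IsLeftInversion y t) : x = y :=
  eq_of_isLeftInversion_iff' cs (cs.length x) x y le_rfl h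


theorem exists_word_of_mem_closure {J : Set B} {x : W}
    (hx : x ∈ Subgroup.closure (cs.simple '' J)) :
    ∃ α : List B, (∀ b ∈ α, b ∈ J) ∧ cs.wordProd α = x := by
  induction hx using Subgroup.closure_induction with
  | mem z hz =>
      obtain ⟨j, hj, rfl⟩ := hz
      exact ⟨[j], by simpa using hj, by simp⟩
  | one => exact ⟨[], by simp, by simp⟩
  | mul a b ha hb iha ihb =>
      obtain ⟨α, hα, rfl⟩ := iha
      obtain ⟨β, hβ, rfl⟩ := ihb
      refine ⟨α ++ β, ?_, by rw [cs.wordProd_append]⟩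
      intro b hb'
      rcases List.mem_append.mp hb' with hh | hh
      · exact hα b hh
      · exact hβ b hh
  | inv a ha iha =>
      obtain ⟨α, hα, rfl⟩ := iha
      refine ⟨α.reverse, ?_, by rw [cs.wordProd_reverse]⟩
      intro b hb'
      exact hα b (List.mem_reverse.mp hb')

theorem wordProd_mem_closure {J : Set B} {α : List B} (hα : ∀ b ∈ α, b ∈ J) :
    cs.wordProd α ∈ Subgroup.closure (cs.simple '' J) := by
  induction α with
  | nil =>
      rw [cs.wordProd_nil]
      exact one_mem _
  | cons i α ih =>
      rw [cs.wordProd_cons]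
      exact mul_mem (Subgroup.subset_closure ⟨i, hα i (by simp), rfl⟩)
        (ih fun b hb => hα b (by simp [hb]))

theorem exists_reduced_subword : ∀ (n : ℕ) (α : List B), α.length ≤ n →
    ∃ β : List B, cs.IsReduced β ∧ cs.wordProd β = cs.wordProd α ∧ ∀ b ∈ β, b ∈ α := by
  intro n
  induction n with
  | zero =>
      intro α hα
      have hnil : α = [] := List.eq_nil_of_length_eq_zero (Nat.le_zero.mp hα)
      subst hnil
      exact ⟨[], by simp [CoxeterSystem.IsReduced], rfl, by simp⟩
  | succ n ih =>
      intro α hα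
      by_cases hred : cs.IsReduced α
      · exact ⟨α, hred, rfl, fun b hb => hb⟩
      cases α with
      | nil => exact ⟨[], by simp [CoxeterSystem.IsReduced], rfl, by simp⟩
      | cons i α' =>
          have hlenα : α'.length ≤ n := by
            simp only [List.length_cons] at hα
            omega
          by_cases hred' : cs.IsReduced α'
          · have hlen : cs.length (cs.wordProd (i :: α')) < (i :: α').length :=
              lt_of_le_of_ne (cs.length_wordProd_le _) hred
            have hlen2 : cs.length (cs.simple i * cs.wordProd α')
                < cs.length (cs.wordProd α') := by
              rw [cs.wordProd_cons, List.length_cons] at hlen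
              have hr : cs.length (cs.wordProd α') = α'.length := hred'
              rcases cs.length_simple_mul (cs.wordProd α') i with hc | hc <;> omega
            have hmem : cs.simple i ∈ cs.leftInvSeq α' := by
              apply mem_leftInvSeq_of_csgn
              exact (isLeftInversion_iff_csgn cs (cs.isReflection_simple i) _).mp
                ⟨cs.isReflection_simple i, hlen2⟩
            obtain ⟨k, hk, hgetk⟩ := List.mem_iff_getElem.mp hmem
            have hkl : k < α'.length := by simpa using hk
            have herase := cs.getD_leftInvSeq_mul_wordProd α' k
            rw [List.getD_eq_getElem _ 1 hk, hgetk] at herase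
            have hsub : (α'.eraseIdx k).length ≤ n := by
              have h1 := List.length_eraseIdx_add_one hkl
              omega
            obtain ⟨β, hβred, hβprod, hβmem⟩ := ih (α'.eraseIdx k) hsub
            refine ⟨β, hβred, ?_, ?_⟩
            · rw [hβprod, ← herase, cs.wordProd_cons]
            · intro b hb
              exact List.mem_cons_of_mem i ((List.eraseIdx_sublist α' k).subset (hβmem b hb))
          · obtain ⟨β', hβ'red, hβ'prod, hβ'mem⟩ := ih α' hlenα
            have hlt : β'.length < α'.length := by
              have h1 : cs.length (cs.wordProd β') = β'.length := hβ'red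
              have h2 : cs.length (cs.wordProd α') ≤ α'.length := cs.length_wordProd_le _
              have h3 : cs.length (cs.wordProd α') ≠ α'.length := hred'
              rw [hβ'prod] at h1
              omega
            obtain ⟨β, hβred, hβprod, hβmem⟩ := ih (i :: β') (by simp; omega)
            refine ⟨β, hβred, ?_, ?_⟩
            · rw [hβprod, cs.wordProd_cons, cs.wordProd_cons, hβ'prod]
            · intro b hb
              rcases List.mem_cons.mp (hβmem b hb) with hh | hh
              · rw [hh]; exact List.mem_cons_self
              · exact List.mem_cons_of_mem i (hβ'mem b hh)

theorem leftInvSeq_mem_closure {J : Set B} {α : List B} (hα : ∀ b ∈ α, b ∈ J) {t : W}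
    (ht : t ∈ cs.leftInvSeq α) : t ∈ Subgroup.closure (cs.simple '' J) := by
  obtain ⟨k, hk, rfl⟩ := List.mem_iff_getElem.mp ht
  have hkl : k < α.length := by simpa using hk
  have hform := cs.getD_leftInvSeq α k
  rw [List.getD_eq_getElem _ 1 hk] at hform
  rw [hform]
  have htake : cs.wordProd (α.take k) ∈ Subgroup.closure (cs.simple '' J) :=
    wordProd_mem_closure cs (fun b hb => hα b (List.take_subset k α hb))
  have hget : α[k]? = some (α[k]'hkl) := by
    rw [List.getElem?_eq_getElem hkl]
  rw [hget]
  simp only [Option.map_some, Option.getD_some]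
  have hsk : cs.simple (α[k]'hkl) ∈ Subgroup.closure (cs.simple '' J) :=
    Subgroup.subset_closure ⟨α[k]'hkl, hα _ (α.getElem_mem hkl), rfl⟩
  exact mul_mem (mul_mem htake hsk) (inv_mem htake)


theorem key_unique {J : Set B} {ρ : W}
    (hmem : ρ ∈ Subgroup.closure (cs.simple '' J))
    (hlong : ∀ x ∈ Subgroup.closure (cs.simple '' J), cs.length x ≤ cs.length ρ)
    {β : List B} (hβred : cs.IsReduced β) (hβJ : ∀ b ∈ β, b ∈ J)
    (hβρ : cs.wordProd β = ρ)
    {x : W} (hx : x ∈ Subgroup.closure (cs.simple '' J))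
    (hli : ∀ t, cs.IsReflection t → t ∈ Subgroup.closure (cs.simple '' J)
      → cs.IsLeftInversion x t) :
    x = ρ := by
  have hHLI : ∀ t, cs.IsReflection t → t ∈ Subgroup.closure (cs.simple '' J)
      → cs.IsLeftInversion ρ t := by
    intro t ht htH
    exact ⟨ht, lt_of_le_of_ne (hlong _ (mul_mem htH hmem)) (ht.length_mul_right_ne ρ)⟩
  have hLIH : ∀ t, cs.IsLeftInversion ρ t → t ∈ Subgroup.closure (cs.simple '' J) := by
    intro t hlt
    have hc := (isLeftInversion_iff_csgn cs hlt.1 ρ).mp hlt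
    rw [← hβρ] at hc
    exact leftInvSeq_mem_closure cs hβJ (mem_leftInvSeq_of_csgn cs hc)
  obtain ⟨ω, hωred, hωx⟩ := cs.exists_reduced_word' x
  have hsub : ∀ t ∈ cs.leftInvSeq β, t ∈ cs.leftInvSeq ω := by
    intro t ht'
    have htH := leftInvSeq_mem_closure cs hβJ ht'
    have htrefl := cs.isReflection_of_mem_leftInvSeq β ht'
    have hlx := hli t htrefl htH
    rw [hωx] at hlx
    exact mem_leftInvSeq_of_csgn cs ((isLeftInversion_iff_csgn cs htrefl _).mp hlx)
  have hcardβ : (cs.leftInvSeq β).toFinset.card = cs.length ρ := by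
    rw [List.toFinset_card_of_nodup (hβred.nodup_leftInvSeq), cs.length_leftInvSeq, ← hβρ]
    exact hβred.symm
  have hcardω : (cs.leftInvSeq ω).toFinset.card = cs.length x := by
    rw [List.toFinset_card_of_nodup (hωred.nodup_leftInvSeq), cs.length_leftInvSeq, hωx]
    exact hωred.symm
  have hsub' : (cs.leftInvSeq β).toFinset ⊆ (cs.leftInvSeq ω).toFinset := by
    intro t ht'
    exact List.mem_toFinset.mpr (hsub t (List.mem_toFinset.mp ht'))
  have hcardle : (cs.leftInvSeq ω).toFinset.card ≤ (cs.leftInvSeq β).toFinset.card := by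
    rw [hcardβ, hcardω]
    exact hlong x hx
  have hfeq : (cs.leftInvSeq β).toFinset = (cs.leftInvSeq ω).toFinset :=
    Finset.eq_of_subset_of_card_le hsub' hcardle
  apply eq_of_isLeftInversion_iff cs
  intro t
  constructor
  · intro hlt
    have htrefl := hlt.1
    have hcx := (isLeftInversion_iff_csgn cs htrefl x).mp hlt
    rw [hωx] at hcx
    have hmemω := mem_leftInvSeq_of_csgn cs hcx
    have hmemβ : t ∈ cs.leftInvSeq β := by
      have h5 : t ∈ (cs.leftInvSeq β).toFinset := by
        rw [hfeq]
        exact List.mem_toFinset.mpr hmemω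
      exact List.mem_toFinset.mp h5
    exact hHLI t htrefl (leftInvSeq_mem_closure cs hβJ hmemβ)
  · intro hlt
    exact hli t hlt.1 (hLIH t hlt)


end

end CoxNormAux


open CoxNormAux in
/-- Let `(W, S)` be a Coxeter system and `J ⊆ S` a spherical subset such that the
longest element `ρ_J` of `⟨J⟩` is central in `⟨J⟩`.  Then the normalizer of `⟨J⟩` in `W`
equals the centralizer of `ρ_J` in `W`. -/
theorem coxeter_normalizer_parabolic_eq_centralizer_longest
    {B W : Type*} [Group W] {M : CoxeterMatrix B} (cs : CoxeterSystem M W) (J : Set B) (ρ : W)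
    (hfin : ((Subgroup.closure (cs.simple '' J) : Subgroup W) : Set W).Finite)
    (hmem : ρ ∈ Subgroup.closure (cs.simple '' J))
    (hlong : ∀ x ∈ Subgroup.closure (cs.simple '' J), cs.length x ≤ cs.length ρ)
    (hcentral : ∀ x ∈ Subgroup.closure (cs.simple '' J), ρ * x = x * ρ) :
    Subgroup.normalizer ((Subgroup.closure (cs.simple '' J) : Subgroup W) : Set W) = Subgroup.centralizer {ρ} := by
  obtain ⟨α, hαJ, hαρ⟩ := exists_word_of_mem_closure cs hmem
  obtain ⟨β, hβred, hβprod, hβsub⟩ := exists_reduced_subword cs α.length α le_rfl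
  have hβJ : ∀ b ∈ β, b ∈ J := fun b hb => hαJ b (hβsub b hb)
  have hβρ : cs.wordProd β = ρ := by rw [hβprod, hαρ]
  have hHLI : ∀ t, cs.IsReflection t → t ∈ Subgroup.closure (cs.simple '' J)
      → cs.IsLeftInversion ρ t := fun t ht htH =>
    ⟨ht, lt_of_le_of_ne (hlong _ (mul_mem htH hmem)) (ht.length_mul_right_ne ρ)⟩
  have hLIH : ∀ t, cs.IsLeftInversion ρ t → t ∈ Subgroup.closure (cs.simple '' J) := by
    intro t hlt
    have hc := (isLeftInversion_iff_csgn cs hlt.1 ρ).mp hlt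
    rw [← hβρ] at hc
    exact leftInvSeq_mem_closure cs hβJ (mem_leftInvSeq_of_csgn cs hc)
  have hρinv : ρ⁻¹ = ρ := by
    apply key_unique cs hmem hlong hβred hβJ hβρ (inv_mem hmem)
    intro t ht htH
    refine ⟨ht, ?_⟩
    have h1 := hlong (t * ρ⁻¹) (mul_mem htH (inv_mem hmem))
    have h2 := ht.length_mul_right_ne ρ⁻¹
    have h3 : cs.length ρ⁻¹ = cs.length ρ := cs.length_inv ρ
    omega
  ext w
  rw [Subgroup.mem_normalizer_iff, Subgroup.mem_centralizer_iff]
  constructor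
  · intro hnorm
    have hkey : w * ρ * w⁻¹ = ρ := by
      apply key_unique cs hmem hlong hβred hβJ hβρ ((hnorm ρ).mp hmem)
      intro t ht htH
      have hu : w⁻¹ * t * w ∈ Subgroup.closure (cs.simple '' J) := by
        apply (hnorm (w⁻¹ * t * w)).mpr
        rw [show w * (w⁻¹ * t * w) * w⁻¹ = t by group]
        exact htH
      have hurefl : cs.IsReflection (w⁻¹ * t * w) := by
        have := ht.conj w⁻¹
        rwa [inv_inv] at this
      have h1 : csgn cs ρ (w⁻¹ * t * w) = -1 := by
        have := (isLeftInversion_iff_csgn cs hurefl ρ).mp (hHLI _ hurefl hu)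
        rwa [hρinv] at this
      apply isLeftInversion_of_csgn
      rw [show (w * ρ * w⁻¹)⁻¹ = w * ρ⁻¹ * w⁻¹ by group, hρinv]
      rw [csgn_mul cs (w * ρ) w⁻¹ t, inv_inv, csgn_mul cs w ρ]
      have hcomm : ρ * (w⁻¹ * t * w) * ρ⁻¹ = w⁻¹ * t * w := by
        rw [hcentral _ hu]
        group
      rw [hcomm, h1, mul_neg_one, neg_mul, csgn_cancel cs w t]
    intro g hg
    rw [Set.mem_singleton_iff] at hg
    subst hg
    nth_rewrite 1 [← hkey]
    group
  · intro hcent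
    have hwc : ρ * w = w * ρ := hcent ρ (Set.mem_singleton ρ)
    have hwc' : ρ * w⁻¹ = w⁻¹ * ρ := by
      calc ρ * w⁻¹ = w⁻¹ * (w * ρ) * w⁻¹ := by group
        _ = w⁻¹ * (ρ * w) * w⁻¹ := by rw [← hwc]
        _ = w⁻¹ * ρ := by group
    have hconjmem : ∀ (v : W), ρ * v = v * ρ →
        ∀ h ∈ Subgroup.closure (cs.simple '' J),
          v * h * v⁻¹ ∈ Subgroup.closure (cs.simple '' J) := by
      intro v hv h hh
      induction hh using Subgroup.closure_induction with
      | mem z hz =>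
          obtain ⟨j, hj, rfl⟩ := hz
          have hsjH : cs.simple j ∈ Subgroup.closure (cs.simple '' J) :=
            Subgroup.subset_closure ⟨j, hj, rfl⟩
          have htrefl : cs.IsReflection (v * cs.simple j * v⁻¹) :=
            (cs.isReflection_simple j).conj v
          apply hLIH
          refine ⟨htrefl, ?_⟩
          have hc : csgn cs ρ⁻¹ (v * cs.simple j * v⁻¹) = -1 := by
            rw [hρinv]
            rw [show ρ = v * ρ * v⁻¹ by rw [← hv]; group]
            rw [csgn_mul cs (v * ρ) v⁻¹, inv_inv, csgn_mul cs v ρ]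
            rw [show v⁻¹ * (v * cs.simple j * v⁻¹) * v = cs.simple j by group]
            rw [show ρ * cs.simple j * ρ⁻¹ = cs.simple j by rw [hcentral _ hsjH]; group]
            have hcsj : csgn cs ρ (cs.simple j) = -1 := by
              have := (isLeftInversion_iff_csgn cs (cs.isReflection_simple j) ρ).mp
                (hHLI _ (cs.isReflection_simple j) hsjH)
              rwa [hρinv] at this
            rw [hcsj, mul_neg_one, neg_mul]
            have hc2 := csgn_cancel cs v (v * cs.simple j * v⁻¹)
            rw [show v⁻¹ * (v * cs.simple j * v⁻¹) * v = cs.simple j by group] at hc2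
            rw [hc2]
          exact ((isLeftInversion_iff_csgn cs htrefl ρ).mpr hc).2
      | one => simpa using one_mem _
      | mul a b ha hb iha ihb =>
          rw [show v * (a * b) * v⁻¹ = (v * a * v⁻¹) * (v * b * v⁻¹) by group]
          exact mul_mem iha ihb
      | inv a ha iha =>
          rw [show v * a⁻¹ * v⁻¹ = (v * a * v⁻¹)⁻¹ by group]
          exact inv_mem iha
    intro h
    constructor
    · exact fun hh => hconjmem w hwc h hh
    · intro hh
      have := hconjmem w⁻¹ hwc' _ hh
      rwa [show w⁻¹ * (w * h * w⁻¹) * w⁻¹⁻¹ = h by group] at this
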